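/- If F, G : ℕ → ℂ are semimultiplicative and neither is identically zero, then their binomial convolution F ∘ G is semimultiplicative, i.e., (F ∘ G)(m)·(F ∘ G)(n) = (F ∘ G)(gcd(m,n))·(F ∘ G)(lcm(m,n)) for all positive integers m, n. -/

import Mathlib

/-- `∏_p C(ν_p(n), ν_p(d))`. -/
def binomCoeff (n d : ℕ) : ℕ :=
  ∏ p ∈ n.primeFactors, Nat.choose (n.factorization p) (d.factorization p)

/-- The binomial convolution. -/
noncomputable def bconv (f g : ℕ → ℂ) (n : ℕ) : ℂ :=
  ∑ d ∈ n.divisors, (binomCoeff n d : ℂ) * f d * g (n / d)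

/-- Semimultiplicative arithmetical function:
`F(m)F(n) = F(gcd(m,n))·F(lcm(m,n))` for all positive integers `m, n`. -/
def IsSemiMult (F : ℕ → ℂ) : Prop :=
  ∀ m n : ℕ, 0 < m → 0 < n → F m * F n = F (Nat.gcd m n) * F (Nat.lcm m n)

open Finset ArithmeticFunction

namespace BconvAux

/-- The product of factorials of prime exponents. -/
def ufun (n : ℕ) : ℕ := ∏ p ∈ n.primeFactors, Nat.factorial (n.factorization p)

lemma ufun_pos (n : ℕ) : 0 < ufun n :=
  Finset.prod_pos fun _ _ => Nat.factorial_pos _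

lemma ufun_ne_zero (n : ℕ) : (ufun n : ℂ) ≠ 0 := by
  exact_mod_cast Nat.cast_ne_zero.mpr (ufun_pos n).ne'

lemma ufun_eq_prod_subset {d n : ℕ} (hd : d ∣ n) (hn : n ≠ 0) :
    ufun d = ∏ p ∈ n.primeFactors, Nat.factorial (d.factorization p) := by
  refine Finset.prod_subset (Nat.primeFactors_mono hd hn) ?_
  intro p _ hp
  have hz : p ∉ d.factorization.support := by
    rw [Nat.support_factorization]; exact hp
  simp [Finsupp.notMem_support_iff.mp hz]

/-- `ufun` as a (multiplicative) arithmetic function. -/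
def U : ArithmeticFunction ℕ := ⟨fun n => if n = 0 then 0 else ufun n, by simp⟩

lemma U_apply {n : ℕ} (hn : n ≠ 0) : U n = ufun n := if_neg hn

lemma U_isMult : U.IsMultiplicative := by
  constructor
  · show (if (1:ℕ) = 0 then 0 else ufun 1) = 1
    simp [ufun]
  · intro m n hmn
    rcases eq_or_ne m 0 with rfl | hm
    · have hn1 : n = 1 := Nat.coprime_zero_left n |>.mp hmn
      subst hn1; simp [U, ufun]
    rcases eq_or_ne n 0 with rfl | hn
    · have hm1 : m = 1 := Nat.coprime_zero_right m |>.mp hmn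
      subst hm1; simp [U, ufun]
    rw [U_apply (mul_ne_zero hm hn), U_apply hm, U_apply hn]
    unfold ufun
    rw [Nat.primeFactors_mul hm hn, Finset.prod_union hmn.disjoint_primeFactors]
    congr 1
    · refine Finset.prod_congr rfl fun p hp => ?_
      have h2 : n.factorization p = 0 := by
        have hz : p ∉ n.factorization.support := by
          rw [Nat.support_factorization]
          exact Finset.disjoint_left.mp hmn.disjoint_primeFactors hp
        exact Finsupp.notMem_support_iff.mp hz
      rw [Nat.factorization_mul hm hn, Finsupp.add_apply, h2, Nat.add_zero]
    · refine Finset.prod_congr rfl fun p hp => ?_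
      have h2 : m.factorization p = 0 := by
        have hz : p ∉ m.factorization.support := by
          rw [Nat.support_factorization]
          exact Finset.disjoint_right.mp hmn.disjoint_primeFactors hp
        exact Finsupp.notMem_support_iff.mp hz
      rw [Nat.factorization_mul hm hn, Finsupp.add_apply, h2, Nat.zero_add]

lemma ufun_semimult {m n : ℕ} (hm : 0 < m) (hn : 0 < n) :
    (ufun m : ℂ) * ufun n = ufun (Nat.gcd m n) * ufun (Nat.lcm m n) := by
  have key := U_isMult.lcm_apply_mul_gcd_apply (x := m) (y := n)
  have hg : Nat.gcd m n ≠ 0 := (Nat.gcd_pos_of_pos_left n hm).ne'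
  have hl : Nat.lcm m n ≠ 0 := Nat.lcm_ne_zero hm.ne' hn.ne'
  rw [U_apply hl, U_apply hg, U_apply hm.ne', U_apply hn.ne'] at key
  have : ufun m * ufun n = ufun (Nat.gcd m n) * ufun (Nat.lcm m n) := by
    rw [← key]; ring
  exact_mod_cast congrArg (Nat.cast : ℕ → ℂ) this

/-- The key binomial identity. -/
lemma ufun_mul_ufun_mul_binom {n d : ℕ} (hn : n ≠ 0) (hd : d ∣ n) :
    ufun d * ufun (n / d) * binomCoeff n d = ufun n := by
  have hd0 : d ≠ 0 := by rintro rfl; exact hn (zero_dvd_iff.mp hd)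
  rw [ufun_eq_prod_subset hd hn, ufun_eq_prod_subset (Nat.div_dvd_of_dvd hd) hn,
    binomCoeff]
  show (∏ p ∈ n.primeFactors, _) * (∏ p ∈ n.primeFactors, _) * ∏ p ∈ n.primeFactors, _ = ufun n
  rw [← Finset.prod_mul_distrib, ← Finset.prod_mul_distrib]
  refine Finset.prod_congr rfl fun p _ => ?_
  have hle : d.factorization p ≤ n.factorization p :=
    ((Nat.factorization_le_iff_dvd hd0 hn).mpr hd) p
  rw [Nat.factorization_div hd, Finsupp.tsub_apply]
  have := Nat.choose_mul_factorial_mul_factorial hle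
  calc Nat.factorial (d.factorization p) * Nat.factorial (n.factorization p - d.factorization p) *
        (n.factorization p).choose (d.factorization p)
      = (n.factorization p).choose (d.factorization p) * Nat.factorial (d.factorization p) *
        Nat.factorial (n.factorization p - d.factorization p) := by ring
    _ = Nat.factorial (n.factorization p) := this

/-- Rewrite the binomial convolution as `ufun · (Dirichlet convolution of F/u and G/u)`. -/
lemma bconv_eq (F G : ℕ → ℂ) {n : ℕ} (hn : n ≠ 0) :
    bconv F G n = (ufun n : ℂ) *
      ∑ d ∈ n.divisors, (F d / ufun d) * (G (n / d) / ufun (n / d)) := by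
  rw [bconv, Finset.mul_sum]
  refine Finset.sum_congr rfl fun d hd => ?_
  obtain ⟨hdvd, -⟩ := Nat.mem_divisors.mp hd
  have key := ufun_mul_ufun_mul_binom hn hdvd
  have key' : (ufun n : ℂ) = (ufun d : ℂ) * ufun (n / d) * binomCoeff n d := by
    exact_mod_cast congrArg (Nat.cast : ℕ → ℂ) key.symm
  rw [key']
  field_simp [ufun_ne_zero]
  have h1 := ufun_ne_zero d
  have h2 := ufun_ne_zero (n / d)
  field_simp

/-- Structure theorem for semimultiplicative functions. -/
lemma exists_structured (F : ℕ → ℂ) (hF : IsSemiMult F) (h0 : ∃ n, 0 < n ∧ F n ≠ 0) :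
    ∃ (a : ℕ) (c : ℂ) (h : ArithmeticFunction ℂ), 0 < a ∧ c ≠ 0 ∧ h.IsMultiplicative ∧
      ∀ n, 0 < n → F n = if a ∣ n then c * h (n / a) else 0 := by
  classical
  set a := Nat.find h0 with ha_def
  obtain ⟨hapos, haF⟩ : 0 < a ∧ F a ≠ 0 := Nat.find_spec h0
  have hdvd : ∀ n, 0 < n → F n ≠ 0 → a ∣ n := by
    intro n hn hFn
    have hmain := hF a n hapos hn
    have hg : F (Nat.gcd a n) ≠ 0 := by
      intro h
      rw [h, zero_mul] at hmain
      exact mul_ne_zero haF hFn hmain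
    have hgpos : 0 < Nat.gcd a n := Nat.gcd_pos_of_pos_left n hapos
    have hle : a ≤ Nat.gcd a n := Nat.find_min' h0 ⟨hgpos, hg⟩
    have hga : Nat.gcd a n = a :=
      le_antisymm (Nat.le_of_dvd hapos (Nat.gcd_dvd_left a n)) hle
    rw [← hga]; exact Nat.gcd_dvd_right a n
  set h : ArithmeticFunction ℂ :=
    ⟨fun k => if k = 0 then 0 else F (a * k) / F a, by simp⟩ with hh
  have happ : ∀ k, h k = if k = 0 then 0 else F (a * k) / F a := fun k => rfl
  refine ⟨a, F a, h, hapos, haF, ⟨?_, ?_⟩, ?_⟩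
  · rw [happ]
    simp [div_self haF]
  · intro m n hmn
    rcases eq_or_ne m 0 with rfl | hm
    · have hn1 : n = 1 := Nat.coprime_zero_left n |>.mp hmn
      subst hn1
      simp only [happ]
      norm_num
    rcases eq_or_ne n 0 with rfl | hn
    · have hm1 : m = 1 := Nat.coprime_zero_right m |>.mp hmn
      subst hm1
      simp only [happ]
      norm_num
    rw [happ, happ, happ, if_neg (mul_ne_zero hm hn), if_neg hm, if_neg hn]
    have hmain := hF (a*m) (a*n) (Nat.mul_pos hapos (Nat.pos_of_ne_zero hm))
      (Nat.mul_pos hapos (Nat.pos_of_ne_zero hn))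
    rw [Nat.gcd_mul_left, Nat.lcm_mul_left, Nat.Coprime.gcd_eq_one hmn,
      Nat.Coprime.lcm_eq_mul hmn, Nat.mul_one] at hmain
    rw [div_mul_div_comm, hmain, mul_div_mul_left _ _ haF]
  · intro n hn
    by_cases hadvd : a ∣ n
    · rw [if_pos hadvd]
      obtain ⟨k, rfl⟩ := hadvd
      have hk : k ≠ 0 := by rintro rfl; simp at hn
      rw [happ, Nat.mul_div_cancel_left k hapos, if_neg hk,
        mul_div_cancel₀ _ haF]
    · rw [if_neg hadvd]
      by_contra hFn
      exact hadvd (hdvd n hn hFn)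

/-- Dirichlet convolution of two structured functions. -/
lemma dirichlet_structured (F' G' : ℕ → ℂ) (a b : ℕ) (c e : ℂ)
    (h₁ h₂ : ArithmeticFunction ℂ) (ha : 0 < a) (hb : 0 < b)
    (hFs : ∀ n, 0 < n → F' n = if a ∣ n then c * h₁ (n / a) else 0)
    (hGs : ∀ n, 0 < n → G' n = if b ∣ n then e * h₂ (n / b) else 0)
    {n : ℕ} (hn : 0 < n) :
    ∑ d ∈ n.divisors, F' d * G' (n / d)
      = if a * b ∣ n then (c * e) * (h₁ * h₂) (n / (a * b)) else 0 := by
  classical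
  have habpos : 0 < a * b := Nat.mul_pos ha hb
  split_ifs with hab
  · -- a*b ∣ n
    set m := n / (a * b) with hm_def
    have hnm : n = a * b * m := (Nat.mul_div_cancel' hab).symm
    have hm : 0 < m := Nat.div_pos (Nat.le_of_dvd hn hab) habpos
    have hmul : (h₁ * h₂) m = ∑ t ∈ m.divisors, h₁ t * h₂ (m / t) := by
      rw [ArithmeticFunction.mul_apply,
        Nat.sum_divisorsAntidiagonal (fun x y => h₁ x * h₂ y)]
    rw [hmul, Finset.mul_sum]
    rw [← Finset.sum_filter_of_ne
      (p := fun d => a ∣ d ∧ b ∣ n / d) (s := n.divisors)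
      (f := fun d => F' d * G' (n / d)) ?_]
    · refine Finset.sum_nbij' (i := fun d => d / a) (j := fun t => a * t) ?_ ?_ ?_ ?_ ?_
      · -- maps filter into m.divisors
        intro d hd
        simp only [Finset.mem_filter, Nat.mem_divisors] at hd
        obtain ⟨⟨hdn, -⟩, had, hbd⟩ := hd
        obtain ⟨t, rfl⟩ := had
        show a * t / a ∈ m.divisors
        rw [Nat.mul_div_cancel_left t ha]
        rw [Nat.dvd_div_iff_mul_dvd hdn] at hbd
        rw [Nat.mem_divisors]
        refine ⟨?_, hm.ne'⟩
        have : a * b * t ∣ a * b * m := by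
          rw [← hnm]
          calc a * b * t = a * t * b := by ring
          _ ∣ n := hbd
        exact (mul_dvd_mul_iff_left habpos.ne').mp this
      · -- maps m.divisors into filter
        intro t ht
        rw [Nat.mem_divisors] at ht
        have htpos : 0 < t := Nat.pos_of_dvd_of_pos ht.1 hm
        obtain ⟨s, hs⟩ := ht.1
        simp only [Finset.mem_filter, Nat.mem_divisors]
        have h1 : n = (a * t) * (b * s) := by rw [hnm, hs]; ring
        have h2 : n / (a * t) = b * s := by
          rw [h1, Nat.mul_div_cancel_left _ (Nat.mul_pos ha htpos)]
        exact ⟨⟨⟨b * s, h1⟩, hn.ne'⟩, ⟨t, rfl⟩, by rw [h2]; exact ⟨s, rfl⟩⟩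
      · intro d hd
        simp only [Finset.mem_filter, Nat.mem_divisors] at hd
        exact Nat.mul_div_cancel' hd.2.1
      · intro t _
        exact Nat.mul_div_cancel_left t ha
      · -- value equality
        intro d hd
        simp only [Finset.mem_filter, Nat.mem_divisors] at hd
        obtain ⟨⟨hdn, -⟩, had, hbd⟩ := hd
        obtain ⟨t, rfl⟩ := had
        show F' (a * t) * G' (n / (a * t))
          = c * e * (h₁ (a * t / a) * h₂ (m / (a * t / a)))
        rw [Nat.mul_div_cancel_left t ha]
        have htpos : 0 < t := by
          rcases Nat.eq_zero_or_pos t with rfl | h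
          · rw [Nat.mul_zero] at hdn; exact absurd (zero_dvd_iff.mp hdn) hn.ne'
          · exact h
        have hdpos : 0 < a * t := Nat.mul_pos ha htpos
        have hndpos : 0 < n / (a * t) := Nat.div_pos (Nat.le_of_dvd hn hdn)  hdpos
        rw [hFs _ hdpos, hGs _ hndpos, if_pos ⟨t, rfl⟩, if_pos hbd,
          Nat.mul_div_cancel_left t ha]
        have htm : t ∣ m := by
          rw [Nat.dvd_div_iff_mul_dvd hdn] at hbd
          have : a * b * t ∣ a * b * m := by
            rw [← hnm]
            calc a * b * t = a * t * b := by ring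
            _ ∣ n := hbd
          exact (mul_dvd_mul_iff_left habpos.ne').mp this
        have hq : n / (a * t) / b = m / t := by
          obtain ⟨s, hs⟩ := htm
          have h1 : n = (a * t * b) * s := by rw [hnm, hs]; ring
          rw [Nat.div_div_eq_div_mul, h1,
            Nat.mul_div_cancel_left s (by positivity), hs,
            Nat.mul_div_cancel_left s htpos]
        rw [hq]; ring
    · -- terms outside the filter vanish
      intro d hd hne
      simp only [Nat.mem_divisors] at hd
      have hdpos : 0 < d := Nat.pos_of_dvd_of_pos hd.1 hn
      have hndpos : 0 < n / d := Nat.div_pos (Nat.le_of_dvd hn hd.1) hdpos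
      by_contra hnp
      rcases not_and_or.mp hnp with h | h
      · refine absurd ?_ hne
        show F' d * G' (n / d) = 0
        rw [hFs d hdpos, if_neg h, zero_mul]
      · refine absurd ?_ hne
        show F' d * G' (n / d) = 0
        rw [hGs _ hndpos, if_neg h, mul_zero]
  · -- ¬ a*b ∣ n : all terms vanish
    refine Finset.sum_eq_zero fun d hd => ?_
    simp only [Nat.mem_divisors] at hd
    have hdpos : 0 < d := Nat.pos_of_dvd_of_pos hd.1 hn
    have hndpos : 0 < n / d := Nat.div_pos (Nat.le_of_dvd hn hd.1) hdpos
    by_cases had : a ∣ d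
    · by_cases hbd : b ∣ n / d
      · exfalso
        apply hab
        rw [Nat.dvd_div_iff_mul_dvd hd.1] at hbd
        calc a * b ∣ d * b := by
              obtain ⟨t, rfl⟩ := had; exact ⟨t, by ring⟩
          _ ∣ n := hbd
      · rw [hGs _ hndpos, if_neg hbd, mul_zero]
    · rw [hFs d hdpos, if_neg had, zero_mul]

/-- A structured function is semimultiplicative. -/
lemma semimult_of_structured (D : ℕ → ℂ) (a : ℕ) (c : ℂ) (M : ArithmeticFunction ℂ)
    (ha : 0 < a) (hM : M.IsMultiplicative)
    (hD : ∀ n, 0 < n → D n = if a ∣ n then c * M (n / a) else 0) :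
    IsSemiMult D := by
  intro m n hm hn
  have hg : 0 < Nat.gcd m n := Nat.gcd_pos_of_pos_left n hm
  have hl : 0 < Nat.lcm m n := Nat.pos_of_ne_zero (Nat.lcm_ne_zero hm.ne' hn.ne')
  rw [hD m hm, hD n hn, hD _ hg, hD _ hl]
  by_cases h1 : a ∣ m
  · by_cases h2 : a ∣ n
    · have hag : a ∣ Nat.gcd m n := Nat.dvd_gcd h1 h2
      have hal : a ∣ Nat.lcm m n := h1.trans (Nat.dvd_lcm_left m n)
      rw [if_pos h1, if_pos h2, if_pos hag, if_pos hal]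
      obtain ⟨m', rfl⟩ := h1
      obtain ⟨n', rfl⟩ := h2
      rw [Nat.gcd_mul_left, Nat.lcm_mul_left,
        Nat.mul_div_cancel_left _ ha, Nat.mul_div_cancel_left _ ha,
        Nat.mul_div_cancel_left _ ha, Nat.mul_div_cancel_left _ ha]
      have key := hM.lcm_apply_mul_gcd_apply (x := m') (y := n')
      linear_combination (-(c * c)) * key
    · have hag : ¬ a ∣ Nat.gcd m n := fun h => h2 (h.trans (Nat.gcd_dvd_right m n))
      rw [if_neg h2, if_neg hag, mul_zero, zero_mul]
  · have hag : ¬ a ∣ Nat.gcd m n := fun h => h1 (h.trans (Nat.gcd_dvd_left m n))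
    rw [if_neg h1, if_neg hag, zero_mul, zero_mul]

end BconvAux

open BconvAux in
/-- If `F` and `G` are semimultiplicative and neither is identically zero, then their
binomial convolution `F ∘ G` is semimultiplicative. -/
theorem bconv_semimultiplicative (F G : ℕ → ℂ)
    (hF : IsSemiMult F) (hG : IsSemiMult G)
    (hF0 : ∃ n : ℕ, 0 < n ∧ F n ≠ 0) (hG0 : ∃ n : ℕ, 0 < n ∧ G n ≠ 0) :
    IsSemiMult (bconv F G) := by
  classical
  set F' : ℕ → ℂ := fun k => F k / (ufun k : ℂ) with hF'def
  set G' : ℕ → ℂ := fun k => G k / (ufun k : ℂ) with hG'def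
  have hF' : IsSemiMult F' := by
    intro m n hm hn
    have := hF m n hm hn
    have hu := ufun_semimult hm hn
    simp only [hF'def]
    rw [div_mul_div_comm, div_mul_div_comm, this, hu]
  have hG' : IsSemiMult G' := by
    intro m n hm hn
    have := hG m n hm hn
    have hu := ufun_semimult hm hn
    simp only [hG'def]
    rw [div_mul_div_comm, div_mul_div_comm, this, hu]
  have hF'0 : ∃ n, 0 < n ∧ F' n ≠ 0 := by
    obtain ⟨n, hn, hFn⟩ := hF0
    exact ⟨n, hn, div_ne_zero hFn (ufun_ne_zero n)⟩
  have hG'0 : ∃ n, 0 < n ∧ G' n ≠ 0 := by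
    obtain ⟨n, hn, hGn⟩ := hG0
    exact ⟨n, hn, div_ne_zero hGn (ufun_ne_zero n)⟩
  obtain ⟨a, c, h₁, ha, hc, hm₁, hFs⟩ := exists_structured F' hF' hF'0
  obtain ⟨b, e, h₂, hb, he, hm₂, hGs⟩ := exists_structured G' hG' hG'0
  set D : ℕ → ℂ := fun n => if a * b ∣ n then (c * e) * (h₁ * h₂) (n / (a * b)) else 0
    with hDdef
  have hDsemi : IsSemiMult D :=
    semimult_of_structured D (a * b) (c * e) (h₁ * h₂) (Nat.mul_pos ha hb)
      (hm₁.mul hm₂) (fun n _ => rfl)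
  have key : ∀ k, 0 < k → bconv F G k = (ufun k : ℂ) * D k := by
    intro k hk
    rw [bconv_eq F G hk.ne']
    congr 1
    exact dirichlet_structured F' G' a b c e h₁ h₂ ha hb hFs hGs hk
  intro m n hm hn
  have hg : 0 < Nat.gcd m n := Nat.gcd_pos_of_pos_left n hm
  have hl : 0 < Nat.lcm m n := Nat.pos_of_ne_zero (Nat.lcm_ne_zero hm.ne' hn.ne')
  rw [key m hm, key n hn, key _ hg, key _ hl]
  have h1 := ufun_semimult hm hn
  have h2 := hDsemi m n hm hn
  calc (ufun m : ℂ) * D m * ((ufun n : ℂ) * D n)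
      = ((ufun m : ℂ) * ufun n) * (D m * D n) := by ring
    _ = ((ufun (Nat.gcd m n) : ℂ) * ufun (Nat.lcm m n))
        * (D (Nat.gcd m n) * D (Nat.lcm m n)) := by rw [h1, h2]
    _ = _ := by ring
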